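/- arXiv:2001.01058 — 3 statements merged into one kernel-verified Lean document; each statement's English description precedes it below -/
import Mathlib

section
/- Let R be a finite unitary ring and I an ideal of R with I ⊆ J(R). If all Sylow p-subgroups of the unit group R* are cyclic, then all Sylow p-subgroups of the unit group (R/I)* are cyclic. -/
private lemma aux_isUnit_of_mul_eq_one {M : Type*} [Monoid M] [Finite M] {a b : M}
    (h : a * b = 1) : IsUnit b := by
  have hinj : Function.Injective (fun x : M => b * x) := by
    intro x y hxy
    have := congrArg (a * ·) hxy
    simpa [← mul_assoc, h] using this
  obtain ⟨c, hc⟩ := (Finite.injective_iff_surjective.mp hinj) 1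
  simp only at hc
  have hab : a = c := by
    calc a = a * (b * c) := by rw [hc, mul_one]
    _ = (a * b) * c := by rw [mul_assoc]
    _ = c := by rw [h, one_mul]
  exact ⟨⟨b, a, by rw [hab]; exact hc, h⟩, rfl⟩

/-- For a finite unitary ring `R` and a (two-sided) ideal `I ⊆ J(R)`, if all Sylow
`p`-subgroups of `Rˣ` are cyclic, then all Sylow `p`-subgroups of `(R/I)ˣ` are cyclic. -/
theorem sylow_cyclic_of_quotient_by_le_jacobson {R : Type*} [Ring R] [Fintype R] [Nontrivial R]
    (p : ℕ) [Fact p.Prime] (I : TwoSidedIdeal R)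
    (hI : ∀ x ∈ I, x ∈ Ideal.jacobson (⊥ : Ideal R))
    (hSyl : ∀ P : Sylow p Rˣ, IsCyclic P) :
    ∀ Q : Sylow p (I.ringCon.Quotient)ˣ, IsCyclic Q := by
  intro Q
  set π : R →+* I.ringCon.Quotient := I.ringCon.mk'
  have hπ : Function.Surjective π := Quotient.exists_rep
  set f : Rˣ →* (I.ringCon.Quotient)ˣ := Units.map (π : R →* I.ringCon.Quotient)
  have hf : Function.Surjective f := by
    intro u
    obtain ⟨r, hr⟩ := hπ (u : I.ringCon.Quotient)
    obtain ⟨s, hs⟩ := hπ ((u⁻¹ : (I.ringCon.Quotient)ˣ) : I.ringCon.Quotient)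
    have hsr : s * r - 1 ∈ I := by
      rw [← TwoSidedIdeal.rel_iff]
      have : π (s * r) = π 1 := by
        rw [map_mul, hr, hs, map_one]
        exact u.inv_mul
      exact I.ringCon.eq.mp this
    have hj : s * r - 1 ∈ Ideal.jacobson (⊥ : Ideal R) := hI _ hsr
    obtain ⟨t, ht⟩ := Ideal.exists_mul_sub_mem_of_sub_one_mem_jacobson _ hj
    rw [Ideal.mem_bot, sub_eq_zero] at ht
    have hrUnit : IsUnit r := by
      have : (t * s) * r = 1 := by rw [mul_assoc]; exact ht
      exact aux_isUnit_of_mul_eq_one this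
    obtain ⟨v, hv⟩ := hrUnit
    refine ⟨v, ?_⟩
    ext
    simp only [f, Units.coe_map, MonoidHom.coe_coe, hv, hr]
  obtain ⟨P, rfl⟩ := Sylow.mapSurjective_surjective hf p Q
  have hPc : IsCyclic P := hSyl P
  have : Function.Surjective (f.subgroupMap P.toSubgroup) := f.subgroupMap_surjective P.toSubgroup
  exact isCyclic_of_surjective _ this
end

section
/- Let R be a finite unitary ring of odd cardinality. Then R = R₀[R*], i.e., R is generated as a ring by its prime subring together with its group of units. -/
/-- In a finite monoid, some positive power of every element satisfies `x ^ (2*n) = x ^ n`. -/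
lemma exists_pow_two_mul_eq {R : Type*} [Monoid R] [Finite R] (x : R) :
    ∃ n, 1 ≤ n ∧ x ^ (2 * n) = x ^ n := by
  suffices H : ∀ a b : ℕ, a < b → x ^ a = x ^ b → ∃ n, 1 ≤ n ∧ x ^ (2 * n) = x ^ n by
    obtain ⟨a, b, hne, hab⟩ := Finite.exists_ne_map_eq_of_infinite (fun k : ℕ => x ^ k)
    rcases hne.lt_or_gt with h | h
    · exact H a b h hab
    · exact H b a h hab.symm
  intro a b hlt heq
  set p := b - a with hp
  have hp1 : 1 ≤ p := by omega
  have hstep : ∀ k, x ^ (a + k + p) = x ^ (a + k) := by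
    intro k
    have hb : x ^ (a + p) = x ^ a := by rw [show a + p = b by omega, ← heq]
    rw [show a + k + p = (a + p) + k by omega, pow_add, hb, ← pow_add]
  have hiter : ∀ j k, x ^ (a + k + j * p) = x ^ (a + k) := by
    intro j
    induction j with
    | zero => intro k; simp
    | succ j ih =>
      intro k
      rw [show a + k + (j + 1) * p = a + (k + p) + j * p by ring, ih (k + p),
        show a + (k + p) = a + k + p by omega, hstep]
  obtain ⟨k, hk1, hk2⟩ : ∃ k, 1 ≤ k ∧ (a + 1) * p = a + k := by
    have h1 : a + 1 ≤ (a + 1) * p := by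
      calc a + 1 = (a + 1) * 1 := (mul_one _).symm
        _ ≤ (a + 1) * p := Nat.mul_le_mul_left _ hp1
    exact ⟨(a + 1) * p - a, by omega, by omega⟩
  refine ⟨(a + 1) * p, by omega, ?_⟩
  have h2N : 2 * ((a + 1) * p) = a + k + (a + 1) * p := by
    rw [two_mul]; nth_rewrite 1 [hk2]; rfl
  rw [h2N, hiter (a + 1) k, hk2]

/-- A finite unitary ring of odd cardinality is generated (as a ring, together with its prime
subring) by its units: `R = R₀[R*]`. -/
theorem eq_closure_units_of_odd_card {R : Type*} [Ring R] [Fintype R] [Nontrivial R]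
    (hodd : Odd (Fintype.card R)) :
    Subring.closure {x : R | IsUnit x} = ⊤ := by
  set S := Subring.closure {x : R | IsUnit x} with hS
  rw [eq_top_iff]
  rintro x -
  -- `2` is invertible, with inverse a natural-number multiple of `1`.
  obtain ⟨m2, hm2⟩ := hodd
  have hc0 : ((Fintype.card R : ℕ) : R) = 0 := Nat.cast_card_eq_zero R
  have htwo : (2 : R) * ((m2 + 1 : ℕ) : R) = 1 := by
    have h1 : ((2 * (m2 + 1) : ℕ) : R) = 1 := by
      rw [show 2 * (m2 + 1) = Fintype.card R + 1 by omega, Nat.cast_add, hc0, Nat.cast_one,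
        zero_add]
    rw [← h1, Nat.cast_mul, Nat.cast_ofNat]
  obtain ⟨n, hn1, hxn⟩ := exists_pow_two_mul_eq x
  obtain ⟨m, rfl⟩ : ∃ m, n = m + 1 := ⟨n - 1, by omega⟩
  -- work inside the commutative subring generated by `x`
  set T : Subring R := Subring.closure {x} with hT
  letI : CommRing T := Subring.closureCommRingOfComm (by rintro a ha b hb; simp only [Set.mem_singleton_iff] at ha hb; subst ha; subst hb; rfl)
  set y : T := ⟨x, Subring.subset_closure rfl⟩ with hy_def
  have hyx : (y : R) = x := rfl
  have hy : y ^ (2 * (m + 1)) = y ^ (m + 1) := by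
    apply Subtype.ext
    push_cast
    exact hxn
  -- the unit `u = x^(m+2) + 1 - x^(m+1)`
  have hU : IsUnit ((y ^ (m + 2) + 1 - y ^ (m + 1)) * (y ^ (2 * m + 1) + 1 - y ^ (m + 1))) := by
    have : (y ^ (m + 2) + 1 - y ^ (m + 1)) * (y ^ (2 * m + 1) + 1 - y ^ (m + 1)) = 1 := by
      linear_combination (y ^ (m + 1) - y - y ^ m + 2) * hy
    rw [this]; exact isUnit_one
  have hu : IsUnit (x ^ (m + 2) + 1 - x ^ (m + 1)) := by
    have := (isUnit_of_mul_isUnit_left hU).map T.subtype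
    simpa [hyx] using this
  -- the unit `v = 2*x^(m+1) - 1`
  have hV : (2 * y ^ (m + 1) - 1) * (2 * y ^ (m + 1) - 1) = 1 := by
    linear_combination 4 * hy
  have hv : IsUnit (2 * x ^ (m + 1) - 1) := by
    have := (IsUnit.of_mul_eq_one _ hV).map T.subtype
    have h2 : ((2 : T) : R) = 2 := map_ofNat T.subtype 2
    simpa [hyx, h2] using this
  -- `x - x^(m+2)` is nilpotent, so `1 + (x - x^(m+2))` is a unit
  have hTnil : (y - y ^ (m + 2)) ^ (m + 1) = 0 := by
    have hfe : IsIdempotentElem (1 - y ^ (m + 1)) := by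
      unfold IsIdempotentElem
      linear_combination hy
    calc (y - y ^ (m + 2)) ^ (m + 1) = ((1 - y ^ (m + 1)) * y) ^ (m + 1) := by ring_nf
      _ = (1 - y ^ (m + 1)) ^ (m + 1) * y ^ (m + 1) := mul_pow _ _ _
      _ = (1 - y ^ (m + 1)) * y ^ (m + 1) := by rw [hfe.pow_succ_eq]
      _ = 0 := by linear_combination -hy
  have htnil : (x - x ^ (m + 2)) ^ (m + 1) = 0 := by
    have : (((y - y ^ (m + 2)) ^ (m + 1) : T) : R) = ((0 : T) : R) := by rw [hTnil]
    push_cast at this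
    simpa [hyx] using this
  have ht : IsUnit (1 + (x - x ^ (m + 2))) :=
    IsNilpotent.isUnit_one_add ⟨m + 1, htnil⟩
  -- memberships
  have he_mem : x ^ (m + 1) ∈ S := by
    have hid : ((m2 + 1 : ℕ) : R) * (1 + (2 * x ^ (m + 1) - 1)) = x ^ (m + 1) := by
      rw [show 1 + (2 * x ^ (m + 1) - 1) = 2 * x ^ (m + 1) by abel, ← mul_assoc,
        (Nat.cast_commute (m2 + 1) (2 : R)).eq, htwo, one_mul]
    rw [← hid]
    exact S.mul_mem (natCast_mem S _)
      (S.add_mem S.one_mem (Subring.subset_closure hv))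
  have hmem1 : x - x ^ (m + 2) ∈ S := by
    have := S.sub_mem (Subring.subset_closure ht) S.one_mem
    simpa using this
  have hmem2 : x ^ (m + 2) ∈ S := by
    have h := S.add_mem
      (S.sub_mem (Subring.subset_closure hu) S.one_mem) he_mem
    have hid : (x ^ (m + 2) + 1 - x ^ (m + 1)) - 1 + x ^ (m + 1) = x ^ (m + 2) := by abel
    rwa [hid] at h
  have : x = (x - x ^ (m + 2)) + x ^ (m + 2) := by abel
  rw [this]
  exact S.add_mem hmem1 hmem2
end

section
/- Every unitary non-commutative ring of order 8 is isomorphic to T₂(GF(2)), the ring of 2×2 upper triangular matrices over the field with two elements. -/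
/-- The ring `T₂(GF(2))` of `2 × 2` upper triangular matrices over `GF(2)`,
as a subring of the full matrix ring. -/
def T2GF2 : Subring (Matrix (Fin 2) (Fin 2) (ZMod 2)) where
  carrier := {M | M 1 0 = 0}
  zero_mem' := by simp
  one_mem' := by simp [Matrix.one_apply]
  add_mem' := by
    intro a b ha hb
    simp_all [Set.mem_setOf_eq, Matrix.add_apply]
  neg_mem' := by
    intro a ha
    simp_all [Set.mem_setOf_eq, Matrix.neg_apply]
  mul_mem' := by
    intro a b ha hb
    simp_all [Set.mem_setOf_eq, Matrix.mul_apply, Fin.sum_univ_two]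

namespace NCR8

abbrev BV : Type := Bool × Bool × Bool

def μ (a b c d u v : BV) : BV :=
  match a, b, c, d, u, v with
  | (a1,a2,a3), (b1,b2,b3), (c1,c2,c3), (d1,d2,d3), (u1,u2,u3), (v1,v2,v3) =>
    (xor (u1&&v1) (xor (xor ((u2&&v2)&&a1) ((u2&&v3)&&c1)) (xor ((u3&&v2)&&d1) ((u3&&v3)&&b1))),
     xor (xor (u1&&v2) (u2&&v1)) (xor (xor ((u2&&v2)&&a2) ((u2&&v3)&&c2)) (xor ((u3&&v2)&&d2) ((u3&&v3)&&b2))),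
     xor (xor (u1&&v3) (u3&&v1)) (xor (xor ((u2&&v2)&&a3) ((u2&&v3)&&c3)) (xor ((u3&&v2)&&d3) ((u3&&v3)&&b3))))

def badd (u v : BV) : BV :=
  match u, v with
  | (u1,u2,u3), (v1,v2,v3) => (xor u1 v1, xor u2 v2, xor u3 v3)

def beqv (u v : BV) : Bool :=
  match u, v with
  | (u1,u2,u3), (v1,v2,v3) => u1 == v1 && u2 == v2 && u3 == v3

def e0 : BV := (true,false,false)
def e1 : BV := (false,true,false)
def e2 : BV := (false,false,true)
def μT (u v : BV) : BV := μ e1 (false,false,false) e2 (false,false,false) u v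
def ψf (A B u : BV) : BV :=
  match A, B, u with
  | (A1,A2,A3), (B1,B2,B3), (u1,u2,u3) =>
    (xor u1 (xor (u2&&A1) (u3&&B1)), xor (u2&&A2) (u3&&B2), xor (u2&&A3) (u3&&B3))
def o : Bool := false
def l : Bool := true
def W (a b c d : BV) : BV × BV :=
  if beqv a (o,o,o) && beqv d (o,l,o) then ((o,o,l),(o,l,o))
  else if beqv a (o,o,o) && beqv c (o,l,o) then ((o,o,l),(l,l,o))
  else if beqv a (o,l,o) && beqv b (o,o,o) && beqv d (o,o,l) then ((l,l,o),(o,o,l))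
  else if beqv a (o,l,o) && beqv b (o,o,o) && beqv c (o,o,l) then ((o,l,o),(o,o,l))
  else if beqv a (o,l,o) && beqv b (o,o,l) && beqv d (l,l,l) then ((l,l,o),(o,l,l))
  else if beqv a (o,l,o) && beqv b (o,o,l) && beqv c (o,o,l) then ((o,l,o),(o,l,l))
  else if beqv a (o,l,o) && beqv b (o,o,l) && beqv c (o,l,o) then ((l,l,o),(l,l,l))
  else if beqv a (o,l,o) && beqv b (o,o,l) then ((o,l,o),(l,l,l))
  else if beqv a (o,l,o) && beqv b (l,o,o) && beqv d (l,l,l) then ((l,l,o),(l,o,l))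
  else if beqv a (o,l,o) && beqv b (l,o,o) then ((o,l,o),(l,o,l))
  else if beqv a (l,o,o) && beqv c (o,o,l) then ((l,o,l),(o,l,o))
  else ((l,o,l),(l,l,o))

def bAll (p : BV → Bool) : Bool :=
  p (o,o,o) && p (o,o,l) && p (o,l,o) && p (o,l,l) && p (l,o,o) && p (l,o,l) && p (l,l,o) && p (l,l,l)

theorem bAll_true {p : BV → Bool} (h : bAll p = true) : ∀ u, p u = true := by
  rcases Bool.and_eq_true_iff.1 h with ⟨h', h8⟩
  rcases Bool.and_eq_true_iff.1 h' with ⟨h', h7⟩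
  rcases Bool.and_eq_true_iff.1 h' with ⟨h', h6⟩
  rcases Bool.and_eq_true_iff.1 h' with ⟨h', h5⟩
  rcases Bool.and_eq_true_iff.1 h' with ⟨h', h4⟩
  rcases Bool.and_eq_true_iff.1 h' with ⟨h', h3⟩
  rcases Bool.and_eq_true_iff.1 h' with ⟨h1, h2⟩
  rintro ⟨(_|_),(_|_),(_|_)⟩ <;> assumption

def hypB (a b c d : BV) : Bool :=
  !(beqv c d) &&
  beqv (μ a b c d (μ a b c d e1 e1) e1) (μ a b c d e1 (μ a b c d e1 e1)) &&
  beqv (μ a b c d (μ a b c d e1 e1) e2) (μ a b c d e1 (μ a b c d e1 e2)) &&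
  beqv (μ a b c d (μ a b c d e1 e2) e1) (μ a b c d e1 (μ a b c d e2 e1)) &&
  beqv (μ a b c d (μ a b c d e2 e1) e1) (μ a b c d e2 (μ a b c d e1 e1)) &&
  beqv (μ a b c d (μ a b c d e1 e2) e2) (μ a b c d e1 (μ a b c d e2 e2)) &&
  beqv (μ a b c d (μ a b c d e2 e1) e2) (μ a b c d e2 (μ a b c d e1 e2)) &&
  beqv (μ a b c d (μ a b c d e2 e2) e1) (μ a b c d e2 (μ a b c d e2 e1)) &&
  beqv (μ a b c d (μ a b c d e2 e2) e2) (μ a b c d e2 (μ a b c d e2 e2))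

def conclB (a b c d : BV) : Bool :=
  match W a b c d with
  | (A, B) =>
    (bAll fun u => bAll fun v => !(beqv (ψf A B u) (ψf A B v)) || beqv u v) &&
    (bAll fun u => bAll fun v => beqv (ψf A B (μ a b c d u v)) (μT (ψf A B u) (ψf A B v)))

set_option maxRecDepth 100000 in
set_option maxHeartbeats 8000000 in
theorem keyB : bAll (fun a => bAll fun b => bAll fun c => bAll fun d =>
    !(hypB a b c d) || conclB a b c d) = true := by decide

theorem beqv_iff : ∀ u v : BV, beqv u v = true ↔ u = v := by decide


theorem beqv_ne {u v : BV} (h : u ≠ v) : beqv u v = false := by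
  cases hb : beqv u v
  · rfl
  · exact absurd ((beqv_iff u v).1 hb) h

/-- The Prop-level key lemma. -/
theorem key {a b c d : BV}
    (h1 : μ a b c d (μ a b c d e1 e1) e1 = μ a b c d e1 (μ a b c d e1 e1))
    (h2 : μ a b c d (μ a b c d e1 e1) e2 = μ a b c d e1 (μ a b c d e1 e2))
    (h3 : μ a b c d (μ a b c d e1 e2) e1 = μ a b c d e1 (μ a b c d e2 e1))
    (h4 : μ a b c d (μ a b c d e2 e1) e1 = μ a b c d e2 (μ a b c d e1 e1))
    (h5 : μ a b c d (μ a b c d e1 e2) e2 = μ a b c d e1 (μ a b c d e2 e2))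
    (h6 : μ a b c d (μ a b c d e2 e1) e2 = μ a b c d e2 (μ a b c d e1 e2))
    (h7 : μ a b c d (μ a b c d e2 e2) e1 = μ a b c d e2 (μ a b c d e2 e1))
    (h8 : μ a b c d (μ a b c d e2 e2) e2 = μ a b c d e2 (μ a b c d e2 e2))
    (hnc : c ≠ d) :
    ∃ A B : BV, Function.Injective (ψf A B) ∧
      ∀ u v, ψf A B (μ a b c d u v) = μT (ψf A B u) (ψf A B v) := by
  have hy : hypB a b c d = true := by
    unfold hypB
    rw [beqv_ne hnc, (beqv_iff _ _).2 h1, (beqv_iff _ _).2 h2, (beqv_iff _ _).2 h3,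
      (beqv_iff _ _).2 h4, (beqv_iff _ _).2 h5, (beqv_iff _ _).2 h6,
      (beqv_iff _ _).2 h7, (beqv_iff _ _).2 h8]
    rfl
  have hc : conclB a b c d = true := by
    have := bAll_true (bAll_true (bAll_true (bAll_true keyB a) b) c) d
    rwa [hy, Bool.not_true, Bool.false_or] at this
  rcases hW : W a b c d with ⟨A, B⟩
  rw [conclB, hW] at hc
  rw [Bool.and_eq_true] at hc
  refine ⟨A, B, ?_, ?_⟩
  · intro u v huv
    have h := bAll_true (bAll_true hc.1 u) v
    rw [(beqv_iff _ _).2 huv, Bool.not_true, Bool.false_or] at h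
    exact (beqv_iff _ _).1 h
  · intro u v
    exact (beqv_iff _ _).1 (bAll_true (bAll_true hc.2 u) v)


section Rside

variable {R : Type*} [Ring R]

/-- Scalar action of `Bool` on `R`. -/
def sB (t : Bool) (r : R) : R := if t then r else 0

theorem sB_xor (h : ∀ r : R, r + r = 0) (p q : Bool) (r : R) :
    sB (xor p q) r = sB p r + sB q r := by
  cases p <;> cases q <;> simp [sB, h r]

theorem sB_mul (p q : Bool) (r t : R) : sB p r * sB q t = sB (p && q) (r * t) := by
  cases p <;> cases q <;> simp [sB]

theorem sB_sB (p q : Bool) (r : R) : sB p (sB q r) = sB (p && q) r := by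
  cases p <;> cases q <;> simp [sB]

theorem sB_add (p : Bool) (r t : R) : sB p (r + t) = sB p r + sB p t := by
  cases p <;> simp [sB]

/-- The linear map attached to the "basis" `1, x, y`. -/
def fB (x y : R) (u : BV) : R := sB u.1 1 + sB u.2.1 x + sB u.2.2 y

theorem fB_badd (h : ∀ r : R, r + r = 0) (x y : R) (u v : BV) :
    fB x y (badd u v) = fB x y u + fB x y v := by
  obtain ⟨u1,u2,u3⟩ := u; obtain ⟨v1,v2,v3⟩ := v
  simp only [fB, badd, sB_xor h]
  abel

theorem fB_μ (h : ∀ r : R, r + r = 0) {x y : R} {a b c d : BV}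
    (ha : fB x y a = x * x) (hb : fB x y b = y * y)
    (hc : fB x y c = x * y) (hd : fB x y d = y * x) (u v : BV) :
    fB x y (μ a b c d u v) = fB x y u * fB x y v := by
  obtain ⟨a1,a2,a3⟩ := a; obtain ⟨b1,b2,b3⟩ := b
  obtain ⟨c1,c2,c3⟩ := c; obtain ⟨d1,d2,d3⟩ := d
  obtain ⟨u1,u2,u3⟩ := u; obtain ⟨v1,v2,v3⟩ := v
  simp only [fB] at ha hb hc hd
  rw [fB, μ]
  rw [fB, fB, add_mul, add_mul, mul_add, mul_add, mul_add, mul_add, mul_add, mul_add]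
  simp only [sB_mul, one_mul, mul_one]
  rw [← ha, ← hb, ← hc, ← hd]
  simp only [sB_xor h, sB_add, sB_sB]
  abel

/-- Elements commuting with `w`, as an additive subgroup. -/
def commSub (w : R) : AddSubgroup R where
  carrier := {r | w * r = r * w}
  zero_mem' := by simp
  add_mem' := by
    intro r t hr ht
    simp only [Set.mem_setOf_eq] at *
    rw [mul_add, add_mul, hr, ht]
  neg_mem' := by
    intro r hr
    simp only [Set.mem_setOf_eq] at *
    rw [mul_neg, neg_mul, hr]

theorem comm_of_closure {x : R} (hx : AddSubgroup.closure {1, x} = ⊤) :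
    ∀ y z : R, y * z = z * y := by
  have hxc : ∀ y ∈ AddSubgroup.closure {1, x}, x * y = y * x := by
    intro y hy
    have hle : AddSubgroup.closure {1, x} ≤ commSub x := by
      rw [AddSubgroup.closure_le]
      rintro r (rfl | rfl) <;> simp [commSub, Set.mem_setOf_eq]
    exact hle hy
  intro y z
  have hy : y ∈ AddSubgroup.closure {1, x} := hx ▸ AddSubgroup.mem_top y
  have hz : z ∈ AddSubgroup.closure {1, x} := hx ▸ AddSubgroup.mem_top z
  have hle : AddSubgroup.closure {1, x} ≤ commSub y := by
    rw [AddSubgroup.closure_le]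
    rintro r (rfl | rfl)
    · simp [commSub, Set.mem_setOf_eq]
    · show y * r = r * y
      exact (hxc y hy).symm
  exact hle hz

theorem char_two [Fintype R] (hcard : Fintype.card R = 8)
    (hnc : ¬ ∀ x y : R, x * y = y * x) : (1 : R) + 1 = 0 := by
  have hnt : Nontrivial R := Fintype.one_lt_card_iff_nontrivial.1 (by rw [hcard]; norm_num)
  have hdvd : addOrderOf (1 : R) ∣ 8 := hcard ▸ addOrderOf_dvd_card
  have hcardR : Nat.card R = 8 := by rw [Nat.card_eq_fintype_card, hcard]
  obtain ⟨i, hi3, hn⟩ := (Nat.dvd_prime_pow Nat.prime_two).1 (show addOrderOf (1:R) ∣ 2 ^ 3 by norm_num; exact hdvd)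
  -- helper for the commutative cases
  have hcontr : ∀ x : R, AddSubgroup.closure {1, x} = ⊤ → False := fun x hx =>
    hnc (comm_of_closure hx)
  have hzm : Nat.card (AddSubgroup.closure {(1:R)}) = addOrderOf (1:R) := by
    rw [← AddSubgroup.zmultiples_eq_closure, Nat.card_zmultiples]
  interval_cases i
  · rw [pow_zero] at hn
    exact absurd (AddMonoid.addOrderOf_eq_one_iff.1 hn) one_ne_zero
  · have := addOrderOf_nsmul_eq_zero (1 : R)
    rw [hn] at this
    rwa [pow_one, two_nsmul] at this
  · -- addOrderOf 1 = 4
    exfalso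
    norm_num at hn
    set H := AddSubgroup.closure {(1:R)} with hH
    have hH4 : Nat.card H = 4 := by rw [hzm, hn]
    obtain ⟨x, hx⟩ : ∃ x : R, x ∉ H := by
      by_contra hall
      push_neg at hall
      have htop : H = ⊤ := top_unique fun r _ => hall r
      rw [htop, AddSubgroup.card_top, hcardR] at hH4
      norm_num at hH4
    apply hcontr x
    set K := AddSubgroup.closure {(1:R), x} with hK
    have hHK : H ≤ K := AddSubgroup.closure_mono (by simp)
    have hxK : x ∈ K := AddSubgroup.subset_closure (by simp)
    have hd1 : Nat.card K ∣ 8 := hcardR ▸ AddSubgroup.card_addSubgroup_dvd_card K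
    have hd2 : (4:ℕ) ∣ Nat.card K := hH4 ▸ AddSubgroup.card_dvd_of_le hHK
    have hK48 : Nat.card K = 4 ∨ Nat.card K = 8 := by
      obtain ⟨m, hm⟩ := hd2
      rw [hm] at hd1 ⊢
      have hpos : 0 < Nat.card K := Nat.card_pos
      have hle : 4 * m ≤ 8 := Nat.le_of_dvd (by norm_num) hd1
      have hm2 : m ≤ 2 := by omega
      interval_cases m
      · omega
      · left; omega
      · right; omega
    rcases hK48 with h4 | h8
    · have heq : H = K := AddSubgroup.eq_of_le_of_card_ge hHK (by rw [h4, hH4])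
      exact absurd (heq ▸ hxK) hx
    · exact AddSubgroup.eq_top_of_card_eq K (by rw [h8, hcardR])
  · -- addOrderOf 1 = 8
    norm_num at hn
    exfalso
    apply hcontr 0
    have h1 : AddSubgroup.closure {(1:R)} = ⊤ := by
      apply AddSubgroup.eq_top_of_card_eq
      rw [hzm, hn, hcardR]
    apply top_unique
    rw [← h1]
    exact AddSubgroup.closure_mono (by simp)


end Rside

def b2z (t : Bool) : ZMod 2 := if t then 1 else 0

theorem memT2 (M : Matrix (Fin 2) (Fin 2) (ZMod 2)) : M ∈ T2GF2 ↔ M 1 0 = 0 := Iff.rfl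

def Θ (u : BV) : T2GF2 :=
  ⟨!![b2z (xor u.1 u.2.1), b2z u.2.2; 0, b2z u.1], by rw [memT2]; simp⟩

theorem Θ_inj : ∀ u v : BV, Θ u = Θ v → u = v := by decide
theorem Θ_mul : ∀ u v : BV, Θ (μT u v) = Θ u * Θ v := by decide
theorem Θ_add : ∀ u v : BV, Θ (badd u v) = Θ u + Θ v := by decide
theorem Θ_one : Θ e0 = 1 := by decide
theorem Θ_zero : Θ (false, false, false) = 0 := by decide

instance : DecidablePred (· ∈ T2GF2) := fun M => decidable_of_iff (M 1 0 = 0) (memT2 M).symm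

theorem cardT2 : Fintype.card T2GF2 = 8 := by decide


theorem badd_eq_zero : ∀ u v : BV, badd u v = (false,false,false) → u = v := by decide
theorem cardBV : Fintype.card BV = 8 := by decide
theorem ψ_zero : ∀ A B : BV, ψf A B (false,false,false) = (false,false,false) := by decide
theorem ψ_e0 : ∀ A B : BV, ψf A B e0 = e0 := by decide
theorem ψ_add : ∀ A B u v : BV, ψf A B (badd u v) = badd (ψf A B u) (ψf A B v) := by decide

end NCR8



open NCR8

/-- Every unitary non-commutative ring of order `8` is isomorphic to `T₂(GF(2))`,
the ring of `2 × 2` upper triangular matrices over the field with two elements. -/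
theorem noncomm_ring_card_eight_iso_triangular {R : Type*} [Ring R] [Fintype R]
    (hcard : Fintype.card R = 8) (hnc : ¬ ∀ x y : R, x * y = y * x) :
    Nonempty (R ≃+* T2GF2) := by
  have h11 : (1 : R) + 1 = 0 := char_two hcard hnc
  push_neg at hnc
  obtain ⟨x, y, hxy⟩ := hnc
  have h2 : ∀ r : R, r + r = 0 := fun r => by
    calc r + r = (1 + 1) * r := by rw [add_mul, one_mul]
    _ = 0 := by rw [h11, zero_mul]
  have hnt : Nontrivial R := Fintype.one_lt_card_iff_nontrivial.1 (by rw [hcard]; norm_num)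
  have hneg : ∀ r : R, -r = r := fun r => neg_eq_of_add_eq_zero_left (h2 r)
  have hker : ∀ u : BV, fB x y u = 0 → u = (false, false, false) := by
    rintro ⟨(_|_), (_|_), (_|_)⟩ h <;> simp [fB, sB] at h ⊢
    · exact hxy (by rw [h, mul_zero, zero_mul])
    · exact hxy (by rw [h, zero_mul, mul_zero])
    · have hy : y = -x := eq_neg_of_add_eq_zero_right h
      exact hxy (by rw [hy, mul_neg, neg_mul])
    · have hy : y = -1 := eq_neg_of_add_eq_zero_right h
      rw [hneg 1] at hy
      exact hxy (by rw [hy, mul_one, one_mul])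
    · have hx : x = -1 := eq_neg_of_add_eq_zero_right h
      rw [hneg 1] at hx
      exact hxy (by rw [hx, mul_one, one_mul])
    · have hy : y = -(1 + x) := eq_neg_of_add_eq_zero_right h
      exact hxy (by rw [hy]; noncomm_ring)
  have hinj : Function.Injective (fB x y) := by
    intro u v huv
    have h0 : fB x y (badd u v) = 0 := by rw [fB_badd h2, huv, h2]
    exact badd_eq_zero u v (hker _ h0)
  have hbijf : Function.Bijective (fB x y) :=
    (Fintype.bijective_iff_injective_and_card _).2 ⟨hinj, by rw [cardBV, hcard]⟩
  let E : BV ≃ R := Equiv.ofBijective _ hbijf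
  have hE : ∀ r : R, fB x y (E.symm r) = r := fun r => E.apply_symm_apply r
  have ha : fB x y (E.symm (x * x)) = x * x := hE _
  have hb : fB x y (E.symm (y * y)) = y * y := hE _
  have hc : fB x y (E.symm (x * y)) = x * y := hE _
  have hd : fB x y (E.symm (y * x)) = y * x := hE _
  set a := E.symm (x * x)
  set b := E.symm (y * y)
  set c := E.symm (x * y)
  set d := E.symm (y * x)
  have fe1 : fB x y e1 = x := by simp [fB, e1, sB]
  have fe2 : fB x y e2 = y := by simp [fB, e2, sB]
  have hmul : ∀ u v, fB x y (μ a b c d u v) = fB x y u * fB x y v := fB_μ h2 ha hb hc hd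
  have hcd : c ≠ d := by
    intro hcd
    apply hxy
    rw [← hc, ← hd, hcd]
  have hI1 : μ a b c d (μ a b c d e1 e1) e1 = μ a b c d e1 (μ a b c d e1 e1) :=
    hinj (by simp only [hmul, fe1, fe2, mul_assoc])
  have hI2 : μ a b c d (μ a b c d e1 e1) e2 = μ a b c d e1 (μ a b c d e1 e2) :=
    hinj (by simp only [hmul, fe1, fe2, mul_assoc])
  have hI3 : μ a b c d (μ a b c d e1 e2) e1 = μ a b c d e1 (μ a b c d e2 e1) :=
    hinj (by simp only [hmul, fe1, fe2, mul_assoc])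
  have hI4 : μ a b c d (μ a b c d e2 e1) e1 = μ a b c d e2 (μ a b c d e1 e1) :=
    hinj (by simp only [hmul, fe1, fe2, mul_assoc])
  have hI5 : μ a b c d (μ a b c d e1 e2) e2 = μ a b c d e1 (μ a b c d e2 e2) :=
    hinj (by simp only [hmul, fe1, fe2, mul_assoc])
  have hI6 : μ a b c d (μ a b c d e2 e1) e2 = μ a b c d e2 (μ a b c d e1 e2) :=
    hinj (by simp only [hmul, fe1, fe2, mul_assoc])
  have hI7 : μ a b c d (μ a b c d e2 e2) e1 = μ a b c d e2 (μ a b c d e2 e1) :=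
    hinj (by simp only [hmul, fe1, fe2, mul_assoc])
  have hI8 : μ a b c d (μ a b c d e2 e2) e2 = μ a b c d e2 (μ a b c d e2 e2) :=
    hinj (by simp only [hmul, fe1, fe2, mul_assoc])
  obtain ⟨A, B, hψinj, hψ⟩ := key hI1 hI2 hI3 hI4 hI5 hI6 hI7 hI8 hcd
  have hsymm_mul : ∀ r t : R, E.symm (r * t) = μ a b c d (E.symm r) (E.symm t) := by
    intro r t
    apply hinj
    rw [hmul, hE, hE, hE]
  have hsymm_add : ∀ r t : R, E.symm (r + t) = badd (E.symm r) (E.symm t) := by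
    intro r t
    apply hinj
    rw [fB_badd h2, hE, hE, hE]
  have hsymm_one : E.symm (1 : R) = e0 := by
    apply hinj
    rw [hE]
    simp [fB, e0, sB]
  have hsymm_zero : E.symm (0 : R) = (false, false, false) := by
    apply hinj
    rw [hE]
    simp [fB, sB]
  let hom : R →+* T2GF2 :=
    { toFun := fun r => Θ (ψf A B (E.symm r))
      map_one' := by show Θ (ψf A B (E.symm 1)) = 1; rw [hsymm_one, ψ_e0, Θ_one]
      map_mul' := fun r t => by
        show Θ (ψf A B (E.symm (r * t))) = Θ (ψf A B (E.symm r)) * Θ (ψf A B (E.symm t))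
        rw [hsymm_mul, hψ, Θ_mul]
      map_zero' := by show Θ (ψf A B (E.symm 0)) = 0; rw [hsymm_zero, ψ_zero, Θ_zero]
      map_add' := fun r t => by
        show Θ (ψf A B (E.symm (r + t))) = Θ (ψf A B (E.symm r)) + Θ (ψf A B (E.symm t))
        rw [hsymm_add, ψ_add, Θ_add] }
  have hbijh : Function.Bijective hom := by
    refine (Fintype.bijective_iff_injective_and_card _).2 ⟨?_, by rw [hcard, cardT2]⟩
    intro r t hrt
    have := Θ_inj _ _ hrt
    have := hψinj this
    exact E.symm.injective this
  exact ⟨RingEquiv.ofBijective hom hbijh⟩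
end
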